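/- Let d ≥ 6 be even and let G be the full projective orthogonal group PGO^±_d(q) acting on an orbit of 1-dimensional subspaces of its natural module V = F_q^d. Then any set of d−2 one-dimensional subspaces of V has nontrivial pointwise stabilizer in G; consequently the minimal base size of this action is at least d−1. -/

import Mathlib

open Module QuadraticMap

section Key

variable {F V : Type*} [Field F] [AddCommGroup V] [Module F V]

private lemma map_eq_of_fix {g : V ≃ₗ[F] V} {L : Submodule F V} (h : ∀ x ∈ L, g x = x) :
    Submodule.map g.toLinearMap L = L := by
  apply le_antisymm
  · rintro _ ⟨x, hx, rfl⟩
    simpa [h x hx] using hx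
  · intro x hx
    exact ⟨x, hx, h x hx⟩

private lemma finrank_finset_sup_le [FiniteDimensional F V] (s : Finset (Submodule F V))
    (h : ∀ L ∈ s, Module.finrank F L = 1) : Module.finrank F ↥(s.sup id) ≤ s.card := by
  classical
  induction s using Finset.induction_on with
  | empty => simp
  | @insert a s ha ih =>
    rw [Finset.sup_insert, Finset.card_insert_of_notMem ha]
    have h1 : Module.finrank F ↥(id a ⊔ s.sup id : Submodule F V)
        ≤ Module.finrank F ↥a + Module.finrank F ↥(s.sup id) :=
      Submodule.finrank_add_le_finrank_add_finrank _ _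
    have h2 := h a (Finset.mem_insert_self a s)
    have h3 := ih (fun L hL => h L (Finset.mem_insert_of_mem hL))
    simp only [id] at h1 ⊢
    omega

private lemma key (d : ℕ) (hd : 6 ≤ d) (hdim : Module.finrank F V = d)
    (Q : QuadraticForm F V)
    (hnd : ∀ x : V, (∀ y : V, QuadraticMap.polar (⇑Q) x y = 0) → x = 0)
    (W : Submodule F V) (hW : Module.finrank F W ≤ d - 2) :
    ∃ g : V ≃ₗ[F] V, (∀ x, Q (g x) = Q x) ∧ (∀ x ∈ W, g x = x) ∧
      ¬ ∃ c : F, ∀ x : V, g x = c • x := by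
  haveI : FiniteDimensional F V := FiniteDimensional.of_finrank_pos (by omega)
  set B : LinearMap.BilinForm F V := polarBilin Q with hBdef
  have hBapp : ∀ x y : V, B x y = polar (⇑Q) x y := fun x y => rfl
  have hB : B.Nondegenerate := ⟨fun x hx => hnd x fun y => hx y,
    fun y hy => hnd y fun x => by rw [polar_comm]; exact hy x⟩
  have hrefl : B.IsRefl := by
    intro x y h
    rw [hBapp, polar_comm]
    exact h
  set U : Submodule F V := B.orthogonal W with hUdef
  have hUrank : 2 ≤ Module.finrank F U := by
    have h1 := LinearMap.BilinForm.finrank_orthogonal hB W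
    rw [hdim] at h1
    rw [hUdef, h1]
    omega
  have hUW : ∀ u ∈ U, ∀ x ∈ W, polar (⇑Q) u x = 0 := by
    intro u hu x hx
    exact hrefl x u (hu x hx)
  by_cases hQU : ∃ v ∈ U, Q v ≠ 0
  · -- reflection case
    obtain ⟨v, hvU, hv⟩ := hQU
    have hvne : v ≠ 0 := fun h => hv (by simp [h])
    set f : Module.Dual F V := (Q v)⁻¹ • (B v) with hfdef
    have hfapp : ∀ x, f x = (Q v)⁻¹ * polar (⇑Q) v x := fun x => rfl
    have hfv : f v = 2 := by
      rw [hfapp, polar_self]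
      field_simp
      rw [nsmul_eq_mul]; ring
    refine ⟨Module.reflection hfv, ?_, ?_, ?_⟩
    · intro x
      rw [Module.reflection_apply, sub_eq_add_neg, ← neg_smul,
        QuadraticMap.map_add (⇑Q) x ((-(f x)) • v), QuadraticMap.map_smul,
        polar_smul_right, hfapp, polar_comm (⇑Q) x v, smul_eq_mul, smul_eq_mul]
      field_simp
      ring
    · intro x hx
      rw [Module.reflection_apply, hfapp, hUW v hvU x hx]
      simp
    · rintro ⟨c, hc⟩
      have hker : LinearMap.ker (B v) ≠ ⊥ := by
        intro hbot
        have h1 := LinearMap.finrank_range_add_finrank_ker (B v)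
        rw [hbot, finrank_bot, add_zero, hdim] at h1
        have h2 : Module.finrank F (LinearMap.range (B v)) ≤ Module.finrank F F :=
          (LinearMap.range (B v)).finrank_le
        rw [Module.finrank_self] at h2
        omega
      obtain ⟨w, hw, hwne⟩ := Submodule.exists_mem_ne_zero_of_ne_bot hker
      have hfw : f w = 0 := by
        rw [hfapp, ← hBapp, LinearMap.mem_ker.mp hw, mul_zero]
      have hgw : Module.reflection hfv w = w := by
        rw [Module.reflection_apply, hfw, zero_smul, sub_zero]
      have hc1 : c = 1 := by
        have h1 := hc w
        rw [hgw] at h1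
        have h2 : (c - 1) • w = 0 := by rw [sub_smul, one_smul, ← h1, sub_self]
        rcases smul_eq_zero.mp h2 with h | h
        · exact sub_eq_zero.mp h
        · exact absurd h hwne
      apply hvne
      apply hnd
      intro y
      have h1 := hc y
      rw [hc1, one_smul, Module.reflection_apply] at h1
      have h0 : f y • v = 0 := sub_eq_self.mp h1
      rcases smul_eq_zero.mp h0 with h | h
      · rw [hfapp] at h
        rcases mul_eq_zero.mp h with h' | h'
        · exact absurd (inv_eq_zero.mp h') hv
        · exact h'
      · exact absurd h hvne
  · -- Eichler / totally singular case
    push_neg at hQU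
    have hUne : U ≠ ⊥ := by
      intro hbot
      rw [hbot, finrank_bot] at hUrank
      omega
    obtain ⟨u, huU, hune⟩ := Submodule.exists_mem_ne_zero_of_ne_bot hUne
    have hnotle : ¬ U ≤ Submodule.span F {u} := by
      intro hle
      have h1 := Submodule.finrank_mono hle
      rw [finrank_span_singleton hune] at h1
      omega
    obtain ⟨v, hvU, hvspan⟩ := SetLike.not_le_iff_exists.mp hnotle
    have hQu : Q u = 0 := hQU u huU
    have hQv : Q v = 0 := hQU v hvU
    have hpuv : polar (⇑Q) u v = 0 := by
      have h1 := hQU (u + v) (U.add_mem huU hvU)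
      simp [polar, h1, hQu, hQv]
    have hpvu : polar (⇑Q) v u = 0 := by rw [polar_comm]; exact hpuv
    have hpuu : polar (⇑Q) u u = 0 := by rw [polar_self, hQu]; simp
    have hpvv : polar (⇑Q) v v = 0 := by rw [polar_self, hQv]; simp
    set e : V →ₗ[F] V := LinearMap.id + (B v).smulRight u - (B u).smulRight v with hedef
    set e' : V →ₗ[F] V := LinearMap.id - (B v).smulRight u + (B u).smulRight v with he'def
    have heapp : ∀ x, e x = x + (polar (⇑Q) v x) • u - (polar (⇑Q) u x) • v := fun x => rfl
    have he'app : ∀ x, e' x = x - (polar (⇑Q) v x) • u + (polar (⇑Q) u x) • v := fun x => rfl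
    have hcomp1 : e ∘ₗ e' = LinearMap.id := by
      ext x
      rw [LinearMap.comp_apply, LinearMap.id_apply, heapp, he'app]
      simp only [polar_add_right, polar_sub_right, polar_smul_right]
      rw [hpuv, hpvu, hpuu, hpvv]
      simp only [smul_eq_mul, mul_zero]
      module
    have hcomp2 : e' ∘ₗ e = LinearMap.id := by
      ext x
      rw [LinearMap.comp_apply, LinearMap.id_apply, he'app, heapp]
      simp only [polar_add_right, polar_sub_right, polar_smul_right]
      rw [hpuv, hpvu, hpuu, hpvv]
      simp only [smul_eq_mul, mul_zero]
      module
    set g : V ≃ₗ[F] V := LinearEquiv.ofLinear e e' hcomp1 hcomp2 with hgdef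
    have hgapp : ∀ x, g x = x + (polar (⇑Q) v x) • u - (polar (⇑Q) u x) • v := heapp
    refine ⟨g, ?_, ?_, ?_⟩
    · intro x
      rw [hgapp, sub_eq_add_neg, ← neg_smul,
        QuadraticMap.map_add (⇑Q) _ ((-(polar (⇑Q) u x)) • v),
        QuadraticMap.map_add (⇑Q) x (polar (⇑Q) v x • u),
        QuadraticMap.map_smul, QuadraticMap.map_smul, polar_add_left, polar_smul_left,
        polar_smul_right, polar_smul_right, polar_smul_right, polar_comm (⇑Q) x v,
        polar_comm (⇑Q) x u, hpuv, hQu, hQv]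
      simp only [smul_eq_mul]
      ring
    · intro x hx
      rw [hgapp, hUW v hvU x hx, hUW u huU x hx]
      simp
    · rintro ⟨c, hc⟩
      have hgu : g u = u := by
        rw [hgapp, hpvu, hpuu]
        simp
      have hc1 : c = 1 := by
        have h1 := hc u
        rw [hgu] at h1
        have h2 : (c - 1) • u = 0 := by rw [sub_smul, one_smul, ← h1, sub_self]
        rcases smul_eq_zero.mp h2 with h | h
        · exact sub_eq_zero.mp h
        · exact absurd h hune
      obtain ⟨y, hy⟩ : ∃ y, polar (⇑Q) u y ≠ 0 := by
        by_contra hcon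
        push_neg at hcon
        exact hune (hnd u hcon)
      apply hvspan
      have h1 := hc y
      rw [hc1, one_smul, hgapp] at h1
      have h2 : (polar (⇑Q) v y) • u = (polar (⇑Q) u y) • v := by
        rw [add_sub_assoc, add_eq_left] at h1
        exact sub_eq_zero.mp h1
      have h5 : v = ((polar (⇑Q) u y)⁻¹ * polar (⇑Q) v y) • u := by
        rw [mul_smul, h2, smul_smul, inv_mul_cancel₀ hy, one_smul]
      rw [h5]
      exact Submodule.smul_mem _ _ (Submodule.mem_span_singleton_self u)

end Key

/-- Let `d ≥ 6` be even and `Q` a non-degenerate quadratic form on a `d`-dimensional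
space `V` over a finite field. Any set of `d - 2` one-dimensional subspaces of `V`
has nontrivial pointwise stabilizer in the projective orthogonal group `PGO`
(i.e. some isometry stabilizing all the lines is non-scalar); consequently any base
for the action of `PGO` on a set of `1`-spaces has size at least `d - 1`. -/
theorem stmt7 {F V : Type*} [Field F] [Fintype F] [AddCommGroup V] [Module F V]
    (d : ℕ) (hd : 6 ≤ d) (hde : Even d) (hdim : Module.finrank F V = d)
    (Q : QuadraticForm F V)
    (hnd : ∀ x : V, (∀ y : V, QuadraticMap.polar (⇑Q) x y = 0) → x = 0) :
    (∀ A : Finset (Submodule F V), A.card = d - 2 →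
      (∀ L ∈ A, Module.finrank F L = 1) →
      ∃ g : V ≃ₗ[F] V, (∀ x, Q (g x) = Q x) ∧
        (∀ L ∈ A, Submodule.map g.toLinearMap L = L) ∧
        ¬ ∃ c : F, ∀ x : V, g x = c • x) ∧
    (∀ B : Finset (Submodule F V), (∀ L ∈ B, Module.finrank F L = 1) →
      (∀ g : V ≃ₗ[F] V, (∀ x, Q (g x) = Q x) →
        (∀ L ∈ B, Submodule.map g.toLinearMap L = L) →
        ∃ c : F, ∀ x : V, g x = c • x) →
      d - 1 ≤ B.card) := by
  haveI : FiniteDimensional F V := FiniteDimensional.of_finrank_pos (by rw [hdim]; omega)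
  constructor
  · intro A hcard hlines
    obtain ⟨g, hiso, hfix, hns⟩ := key d hd hdim Q hnd (A.sup id)
      (by rw [← hcard]; exact finrank_finset_sup_le A hlines)
    refine ⟨g, hiso, ?_, hns⟩
    intro L hL
    exact map_eq_of_fix fun x hx => hfix x (Finset.le_sup (f := id) hL hx)
  · intro B hlines hbase
    by_contra hcon
    push_neg at hcon
    have hcard : B.card ≤ d - 2 := by omega
    obtain ⟨g, hiso, hfix, hns⟩ := key d hd hdim Q hnd (B.sup id)
      (le_trans (finrank_finset_sup_le B hlines) hcard)
    exact hns (hbase g hiso fun L hL =>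
      map_eq_of_fix fun x hx => hfix x (Finset.le_sup (f := id) hL hx))
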